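/- (Minimum Angle Theorem, trace form.) Let X_C ∈ ℝ^{N×n} and Y_C ∈ ℝ^{N×m}. Suppose U ∈ ℝ^{N×z} satisfies UᵀU = I_z, X_C = U·F_X and Y_C = U·F_Y for F_X ∈ ℝ^{z×n}, F_Y ∈ ℝ^{z×m}; F_X = W·A where W ∈ ℝ^{z×n} has pairwise orthogonal nonzero columns w_1,…,w_n and A is an invertible n×n matrix; F_Y = V·B where V ∈ ℝ^{z×m} has pairwise orthogonal nonzero columns v_1,…,v_m and B is an invertible m×m matrix; and X_CᵀX_C and Y_CᵀY_C are invertible. Then tr((X_CᵀX_C)⁻¹ X_CᵀY_C (Y_CᵀY_C)⁻¹ Y_CᵀX_C) = Σ_{i=1}^{n} Σ_{j=1}^{m} (w_iᵀv_j)² / ((w_iᵀw_i)(v_jᵀv_j)). -/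

import Mathlib

open Matrix

lemma trace_diag_sq {n m : ℕ} (d : Fin n → ℝ) (e : Fin m → ℝ)
    (M : Matrix (Fin n) (Fin m) ℝ) :
    trace (Matrix.diagonal d * M * Matrix.diagonal e * Mᵀ)
      = ∑ i : Fin n, ∑ j : Fin m, d i * (M i j) ^ 2 * e j := by
  have h : ∀ i, (Matrix.diagonal d * M * Matrix.diagonal e * Mᵀ) i i
      = ∑ j : Fin m, d i * (M i j) ^ 2 * e j := by
    intro i
    rw [Matrix.mul_apply]
    refine Finset.sum_congr rfl fun j _ => ?_
    simp [Matrix.mul_diagonal, Matrix.diagonal_mul]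
    ring
  simp only [Matrix.trace, Matrix.diag, h]

theorem minimum_angle {N z n m : ℕ}
    (X : Matrix (Fin N) (Fin n) ℝ) (Y : Matrix (Fin N) (Fin m) ℝ)
    (U : Matrix (Fin N) (Fin z) ℝ) (hU : Uᵀ * U = 1)
    (FX : Matrix (Fin z) (Fin n) ℝ) (FY : Matrix (Fin z) (Fin m) ℝ)
    (hX : X = U * FX) (hY : Y = U * FY)
    (W : Matrix (Fin z) (Fin n) ℝ) (A : Matrix (Fin n) (Fin n) ℝ) (hA : IsUnit A)
    (hFX : FX = W * A)
    (V : Matrix (Fin z) (Fin m) ℝ) (B : Matrix (Fin m) (Fin m) ℝ) (hB : IsUnit B)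
    (hFY : FY = V * B)
    (hWorth : ∀ i j : Fin n, i ≠ j → Wᵀ i ⬝ᵥ Wᵀ j = 0) (hWne : ∀ i : Fin n, Wᵀ i ≠ 0)
    (hVorth : ∀ i j : Fin m, i ≠ j → Vᵀ i ⬝ᵥ Vᵀ j = 0) (hVne : ∀ j : Fin m, Vᵀ j ≠ 0)
    (hXX : IsUnit (Xᵀ * X)) (hYY : IsUnit (Yᵀ * Y)) :
    trace ((Xᵀ * X)⁻¹ * Xᵀ * Y * (Yᵀ * Y)⁻¹ * Yᵀ * X)
      = ∑ i : Fin n, ∑ j : Fin m,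
          (Wᵀ i ⬝ᵥ Vᵀ j) ^ 2 / ((Wᵀ i ⬝ᵥ Wᵀ i) * (Vᵀ j ⬝ᵥ Vᵀ j)) := by
  subst hFX hFY hX hY
  set d : Fin n → ℝ := fun i => Wᵀ i ⬝ᵥ Wᵀ i with hd_def
  set e : Fin m → ℝ := fun j => Vᵀ j ⬝ᵥ Vᵀ j with he_def
  have hd : ∀ i, d i ≠ 0 := fun i h => hWne i (dotProduct_self_eq_zero.mp h)
  have he : ∀ j, e j ≠ 0 := fun j h => hVne j (dotProduct_self_eq_zero.mp h)
  have hWW : Wᵀ * W = Matrix.diagonal d := by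
    ext i j
    rcases eq_or_ne i j with rfl | hij
    · simp [Matrix.mul_apply, Matrix.diagonal, hd_def, dotProduct,
        Matrix.transpose_apply]
    · simpa [Matrix.mul_apply, Matrix.diagonal_apply_ne _ hij, dotProduct,
        Matrix.transpose_apply] using hWorth i j hij
  have hVV : Vᵀ * V = Matrix.diagonal e := by
    ext i j
    rcases eq_or_ne i j with rfl | hij
    · simp [Matrix.mul_apply, Matrix.diagonal, he_def, dotProduct,
        Matrix.transpose_apply]
    · simpa [Matrix.mul_apply, Matrix.diagonal_apply_ne _ hij, dotProduct,
        Matrix.transpose_apply] using hVorth i j hij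
  -- determinant units
  have hAd : IsUnit A.det := (Matrix.isUnit_iff_isUnit_det A).mp hA
  have hBd : IsUnit B.det := (Matrix.isUnit_iff_isUnit_det B).mp hB
  have hATd : IsUnit Aᵀ.det := by rwa [Matrix.det_transpose]
  have hBTd : IsUnit Bᵀ.det := by rwa [Matrix.det_transpose]
  -- Gram matrices
  have hcU : ∀ {p : ℕ} (Z : Matrix (Fin z) (Fin p) ℝ), Uᵀ * (U * Z) = Z := fun Z => by
    rw [← Matrix.mul_assoc, hU, Matrix.one_mul]
  set M : Matrix (Fin n) (Fin m) ℝ := Wᵀ * V with hM_def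
  have hG : (U * (W * A))ᵀ * (U * (W * A)) = Aᵀ * Matrix.diagonal d * A := by
    simp only [Matrix.transpose_mul, Matrix.mul_assoc, hcU]
    rw [← Matrix.mul_assoc Wᵀ W A, hWW]
  have hH : (U * (V * B))ᵀ * (U * (V * B)) = Bᵀ * Matrix.diagonal e * B := by
    simp only [Matrix.transpose_mul, Matrix.mul_assoc, hcU]
    rw [← Matrix.mul_assoc Vᵀ V B, hVV]
  have hXY : (U * (W * A))ᵀ * (U * (V * B)) = Aᵀ * M * B := by
    simp only [Matrix.transpose_mul, Matrix.mul_assoc, hcU, hM_def]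
  have hYX : (U * (V * B))ᵀ * (U * (W * A)) = Bᵀ * Mᵀ * A := by
    simp only [Matrix.transpose_mul, Matrix.mul_assoc, hcU, hM_def,
      Matrix.transpose_transpose]
  -- regroup the goal
  rw [Matrix.mul_assoc _ ((U * (V * B))ᵀ) (U * (W * A)),
    Matrix.mul_assoc ((U * (W * A))ᵀ * (U * (W * A)))⁻¹ ((U * (W * A))ᵀ) (U * (V * B)),
    hG, hH, hXY, hYX]
  -- cancellation lemmas
  have cAT : ∀ {p : ℕ} (Z : Matrix (Fin n) (Fin p) ℝ), Aᵀ⁻¹ * (Aᵀ * Z) = Z := fun Z => by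
    rw [← Matrix.mul_assoc, Matrix.nonsing_inv_mul _ hATd, Matrix.one_mul]
  have cB : ∀ {p : ℕ} (Z : Matrix (Fin m) (Fin p) ℝ), B * (B⁻¹ * Z) = Z := fun Z => by
    rw [← Matrix.mul_assoc, Matrix.mul_nonsing_inv _ hBd, Matrix.one_mul]
  have cBT : ∀ {p : ℕ} (Z : Matrix (Fin m) (Fin p) ℝ), Bᵀ⁻¹ * (Bᵀ * Z) = Z := fun Z => by
    rw [← Matrix.mul_assoc, Matrix.nonsing_inv_mul _ hBTd, Matrix.one_mul]
  rw [Matrix.mul_inv_rev, Matrix.mul_inv_rev, Matrix.mul_inv_rev, Matrix.mul_inv_rev]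
  simp only [Matrix.mul_assoc, cAT, cB, cBT]
  simp only [← Matrix.mul_assoc]
  rw [Matrix.trace_mul_comm]
  simp only [← Matrix.mul_assoc]
  rw [Matrix.mul_nonsing_inv _ hAd, Matrix.one_mul]
  -- diagonal inverses
  have hDw : (Matrix.diagonal d)⁻¹ = Matrix.diagonal (fun i => (d i)⁻¹) := by
    apply Matrix.inv_eq_left_inv
    rw [Matrix.diagonal_mul_diagonal]
    rw [show (fun i => (d i)⁻¹ * d i) = fun _ => (1 : ℝ) from
      funext fun i => inv_mul_cancel₀ (hd i), Matrix.diagonal_one]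
  have hDv : (Matrix.diagonal e)⁻¹ = Matrix.diagonal (fun j => (e j)⁻¹) := by
    apply Matrix.inv_eq_left_inv
    rw [Matrix.diagonal_mul_diagonal]
    rw [show (fun j => (e j)⁻¹ * e j) = fun _ => (1 : ℝ) from
      funext fun j => inv_mul_cancel₀ (he j), Matrix.diagonal_one]
  rw [hDw, hDv, trace_diag_sq]
  refine Finset.sum_congr rfl fun i _ => Finset.sum_congr rfl fun j _ => ?_
  have hMij : M i j = Wᵀ i ⬝ᵥ Vᵀ j := by
    simp [hM_def, Matrix.mul_apply, dotProduct, Matrix.transpose_apply]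
  rw [hMij]
  field_simp
  rfl
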